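/- arXiv:2507.23628 — 4 statements merged into one kernel-verified Lean document; each statement's English description precedes it below -/
import Mathlib

section
/- Let G be a locally compact abelian group, H ⊆ G a closed subgroup, and ψ a nonzero positive Radon measure on G with supp(ψ) ⊆ H whose Fourier transform (as a tempered measure) is a measure supported in the annihilator H^⊥. Then ψ is translation invariant under H, hence a Haar measure on H. -/
set_option maxHeartbeats 1000000


open MeasureTheory

/-- Let `G` be a locally compact abelian group, `H ⊆ G` a closed subgroup, and
`ψ` a nonzero positive Radon measure on `G` supported in `H` whose Fourier transform is a measure
`ψ̂` supported in the annihilator `H^⊥` (the support conditions and the distributional meaning of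
the Fourier transform are expressed through the Parseval-type pairing `hdual`). Then `ψ` is
translation invariant under `H`, hence a Haar measure on `H`. -/
theorem measure_haar_of_fourier_supported_in_annihilator
    {G : Type*} [CommGroup G] [TopologicalSpace G] [IsTopologicalGroup G]
    [LocallyCompactSpace G] [T2Space G] [MeasurableSpace G] [BorelSpace G]
    [MeasurableSpace (PontryaginDual G)] [BorelSpace (PontryaginDual G)]
    (μ : Measure G) [μ.IsHaarMeasure]
    (H : Subgroup G) (hH : IsClosed (H : Set G))
    (ψ : Measure G) (hne : ψ ≠ 0) [ψ.Regular]
    (hsupp : ∀ s : Set G, MeasurableSet s → Disjoint s (H : Set G) → ψ s = 0)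
    (ψhat : Measure (PontryaginDual G))
    (hsupphat : ∀ t : Set (PontryaginDual G), MeasurableSet t →
      Disjoint t {χ : PontryaginDual G | ∀ h ∈ H, χ h = 1} → ψhat t = 0)
    (hdual : ∀ f : G → ℂ, Continuous f → HasCompactSupport f →
      ∫ g, f g ∂ψ =
        ∫ χ : PontryaginDual G, (∫ g, (starRingEnd ℂ) (χ g : ℂ) * f g ∂μ) ∂ψhat) :
    ∀ h ∈ H, ∀ s : Set G, MeasurableSet s → ψ ((fun g => g * h) ⁻¹' s) = ψ s := by
  intro h hh s hs
  haveI : μ.IsMulRightInvariant := inferInstance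
  -- Continuity of evaluation at `h` on the dual group.
  have heval : Continuous (fun χ : PontryaginDual G => ((χ h : Circle) : ℂ)) := by
    have : Continuous (fun χ : ContinuousMonoidHom G Circle => χ h) := continuous_eval_const h
    exact continuous_subtype_val.comp this
  -- Almost every character (w.r.t. `ψhat`) takes the value `1` at `h`.
  have hae : ∀ᵐ χ ∂ψhat, ((χ h : Circle) : ℂ) = 1 := by
    rw [MeasureTheory.ae_iff]
    apply hsupphat
    · exact ((isClosed_eq heval continuous_const).measurableSet).compl
    · rw [Set.disjoint_left]
      intro χ hχ1 hχ2
      exact hχ1 (by rw [hχ2 h hh]; simp)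
  -- Key: `ψ`-integrals of compactly supported continuous functions are invariant under `· * h`.
  have key : ∀ f : G → ℂ, Continuous f → HasCompactSupport f →
      ∫ g, f (g * h) ∂ψ = ∫ g, f g ∂ψ := by
    intro f hf hcf
    have hc1 : Continuous fun g => f (g * h) := hf.comp (continuous_mul_right h)
    have hc2 : HasCompactSupport fun g => f (g * h) :=
      hcf.comp_homeomorph (Homeomorph.mulRight h)
    rw [hdual _ hc1 hc2, hdual f hf hcf]
    refine integral_congr_ae ?_
    filter_upwards [hae] with χ hχ
    have hmul : ∀ x : G, ((χ (x * h) : Circle) : ℂ) = ((χ x : Circle) : ℂ) := by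
      intro x
      have : χ (x * h) = χ x * χ h := map_mul χ x h
      rw [this, Circle.coe_mul, hχ, mul_one]
    calc ∫ x, (starRingEnd ℂ) ((χ x : Circle) : ℂ) * f (x * h) ∂μ
        = ∫ x, (fun y => (starRingEnd ℂ) ((χ y : Circle) : ℂ) * f y) (x * h) ∂μ := by
          refine integral_congr_ae (Filter.Eventually.of_forall fun x => ?_)
          simp only [hmul x]
      _ = ∫ y, (starRingEnd ℂ) ((χ y : Circle) : ℂ) * f y ∂μ :=
          integral_mul_right_eq_self (μ := μ) (fun y => (starRingEnd ℂ) ((χ y : Circle) : ℂ) * f y) h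
  -- Real-valued version of `key`.
  have keyR : ∀ f : G → ℝ, Continuous f → HasCompactSupport f →
      ∫ g, f (g * h) ∂ψ = ∫ g, f g ∂ψ := by
    intro f hf hcf
    have h1 : Continuous fun g => ((f g : ℂ)) := Complex.continuous_ofReal.comp hf
    have h2 : HasCompactSupport fun g => ((f g : ℂ)) := by
      have : HasCompactSupport (Complex.ofReal ∘ f) := hcf.comp_left (by simp)
      exact this
    have hkey := key _ h1 h2
    have e1 : ∫ g, ((f (g * h) : ℂ)) ∂ψ = ((∫ g, f (g * h) ∂ψ : ℝ) : ℂ) :=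
      integral_ofReal (𝕜 := ℂ)
    have e2 : ∫ g, ((f g : ℂ)) ∂ψ = ((∫ g, f g ∂ψ : ℝ) : ℂ) :=
      integral_ofReal (𝕜 := ℂ)
    rw [e1, e2, Complex.ofReal_inj] at hkey
    exact hkey
  -- The pushforward measure under `· * h`.
  set ν : Measure G := ψ.map (fun g => g * h) with hν
  have hmeas : Measurable (fun g : G => g * h) := measurable_mul_const h
  have hregν : ν.Regular := Measure.Regular.map (Homeomorph.mulRight h)
  -- Integrals of compactly supported continuous functions agree for `ν` and `ψ`.
  have hint : ∀ f : G → ℝ, Continuous f → HasCompactSupport f →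
      ∫ g, f g ∂ν = ∫ g, f g ∂ψ := by
    intro f hf hcf
    rw [hν, integral_map hmeas.aemeasurable hf.aestronglyMeasurable]
    exact keyR f hf hcf
  -- `ν` and `ψ` agree on compact sets.
  have hcompact : ∀ k : Set G, IsCompact k → ν k = ψ k := by
    intro k hk
    rw [hk.measure_eq_biInf_integral_hasCompactSupport ν,
      hk.measure_eq_biInf_integral_hasCompactSupport ψ]
    refine le_antisymm ?_ ?_ <;>
    · refine le_iInf₂ fun f hf => le_iInf fun hcf => le_iInf fun hfk => le_iInf fun hf0 => ?_
      refine iInf₂_le_of_le f hf <| iInf_le_of_le hcf <| iInf_le_of_le hfk <|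
        iInf_le_of_le hf0 ?_
      rw [hint f hf hcf]
  -- `ν` and `ψ` agree on open sets.
  have hopen : ∀ U : Set G, IsOpen U → ν U = ψ U := by
    intro U hU
    rw [Measure.Regular.innerRegular.measure_eq_iSup hU,
      Measure.Regular.innerRegular.measure_eq_iSup hU]
    refine iSup_congr fun K => iSup_congr fun _ => iSup_congr fun hK => hcompact K hK
  -- `ν` and `ψ` agree on all sets.
  have hall : ν s = ψ s := by
    rw [Set.measure_eq_iInf_isOpen s ν, Set.measure_eq_iInf_isOpen s ψ]
    exact iInf_congr fun U => iInf_congr fun _ => iInf_congr fun hU => hopen U hU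
  rw [← hall, hν, Measure.map_apply hmeas hs]
end

section
/- Let G be a second countable locally compact abelian group and H a compact open subgroup with Haar measure μ_G normalized so that the Fourier inversion formula holds with Haar measure μ_Ĝ on Ĝ. Then μ_G(H) · μ_Ĝ(H^⊥) = 1, where H^⊥ is the (compact open) annihilator of H in Ĝ. -/
open MeasureTheory Pointwise

lemma annihilator_isCompact {G : Type*} [CommGroup G] [TopologicalSpace G] [IsTopologicalGroup G]
    (H : Subgroup G) (hopen : IsOpen (H : Set G)) :
    IsCompact {χ : PontryaginDual G | ∀ h ∈ H, χ h = 1} := by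
  set Λ : Set (PontryaginDual G) := {χ | ∀ h ∈ H, χ h = 1}
  set S : Set C(G, Circle) := ContinuousMonoidHom.toContinuousMap '' Λ with hS
  have key : ∀ (f : G → Circle), (∀ a b, f (a * b) = f a * f b) → (∀ h ∈ H, f h = 1) →
      ∀ x : G, ∀ y ∈ x • (H : Set G), f y = f x := by
    rintro f hmul hH x y ⟨h, hh, rfl⟩
    simp only [smul_eq_mul, hmul, hH h hh, mul_one]
  have hnhds : ∀ x : G, x • (H : Set G) ∈ nhds x := fun x =>
    (hopen.smul x).mem_nhds ⟨1, H.one_mem, mul_one x⟩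
  have himg : ContinuousMap.toFun '' S =
      {f : G → Circle | (∀ a b, f (a * b) = f a * f b) ∧ ∀ h ∈ H, f h = 1} := by
    ext f
    constructor
    · rintro ⟨g, ⟨χ, hχ, rfl⟩, rfl⟩
      exact ⟨fun a b => map_mul χ a b, hχ⟩
    · rintro ⟨hmul, hH⟩
      have hcont : Continuous f := by
        rw [continuous_iff_continuousAt]
        intro x
        have : f =ᶠ[nhds x] fun _ => f x :=
          Filter.eventually_of_mem (hnhds x) (fun y hy => key f hmul hH x y hy)
        exact this.continuousAt
      refine ⟨(⟨⟨⟨f, hH 1 H.one_mem⟩, fun a b => hmul a b⟩, hcont⟩ :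
        ContinuousMonoidHom G Circle).toContinuousMap, ⟨_, ?_, rfl⟩, rfl⟩
      exact fun h hh => hH h hh
  have hSc : IsCompact S := by
    apply ArzelaAscoli.isCompact_of_equicontinuous
    · rw [himg]
      have heq : {f : G → Circle | (∀ a b, f (a * b) = f a * f b) ∧ ∀ h ∈ H, f h = 1} =
          (⋂ a, ⋂ b, {f : G → Circle | f (a * b) = f a * f b}) ∩
          ⋂ h ∈ H, {f : G → Circle | f h = 1} := by
        ext f; simp [Set.mem_iInter]
      have hclosed : IsClosed {f : G → Circle |
          (∀ a b, f (a * b) = f a * f b) ∧ ∀ h ∈ H, f h = 1} := by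
        rw [heq]
        apply IsClosed.inter
        · exact isClosed_iInter fun a => isClosed_iInter fun b =>
            isClosed_eq (continuous_apply (a * b)) ((continuous_apply a).mul (continuous_apply b))
        · exact isClosed_iInter fun h => isClosed_iInter fun _ =>
            isClosed_eq (continuous_apply h) continuous_const
      exact hclosed.isCompact
    · intro x U hU
      filter_upwards [hnhds x] with y hy i
      obtain ⟨χ, hχ, hi⟩ := i.2
      have h1 : (i : C(G, Circle)) y = (i : C(G, Circle)) x := by
        rw [← hi]
        exact key χ (map_mul χ) hχ x y hy
      rw [show ((i : C(G, Circle)) : G → Circle) y = (i : C(G, Circle)) x from h1]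
      exact refl_mem_uniformity hU
  have hpre : (ContinuousMonoidHom.toContinuousMap ⁻¹' S : Set (PontryaginDual G)) = Λ := by
    ext χ
    constructor
    · rintro ⟨ψ, hψ, h⟩
      rwa [← ContinuousMonoidHom.toContinuousMap_injective h]
    · intro hχ; exact ⟨χ, hχ, rfl⟩
  rw [← hpre]
  exact (ContinuousMonoidHom.isClosedEmbedding_toContinuousMap G Circle).isCompact_preimage hSc

/-- Let `G` be a second countable locally compact abelian group and `H` a
compact open subgroup, with Haar measure `μ` on `G` normalized so that the Fourier inversion
formula holds with the Haar measure `μhat` on the Pontryagin dual `Ĝ`. Then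
`μ H * μhat H^⊥ = 1`, where `H^⊥` is the annihilator of `H` in `Ĝ`. -/
theorem haar_compact_open_mul_annihilator_eq_one
    {G : Type*} [CommGroup G] [TopologicalSpace G] [IsTopologicalGroup G]
    [LocallyCompactSpace G] [T2Space G] [SecondCountableTopology G]
    [MeasurableSpace G] [BorelSpace G]
    [MeasurableSpace (PontryaginDual G)] [BorelSpace (PontryaginDual G)]
    (μ : Measure G) [μ.IsHaarMeasure]
    (μhat : Measure (PontryaginDual G)) [μhat.IsHaarMeasure]
    (H : Subgroup G) (hcomp : IsCompact (H : Set G)) (hopen : IsOpen (H : Set G))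
    (hinv : ∀ f : G → ℂ, Continuous f → HasCompactSupport f →
      Integrable (fun χ : PontryaginDual G => ∫ g, (starRingEnd ℂ) (χ g : ℂ) * f g ∂μ) μhat →
      ∀ x : G, f x =
        ∫ χ : PontryaginDual G, (∫ g, (starRingEnd ℂ) (χ g : ℂ) * f g ∂μ) * (χ x : ℂ) ∂μhat) :
    μ (H : Set G) * μhat {χ : PontryaginDual G | ∀ h ∈ H, χ h = 1} = 1 := by
  set Λ : Set (PontryaginDual G) := {χ : PontryaginDual G | ∀ h ∈ H, χ h = 1} with hΛdef
  have hΛc : IsCompact Λ := annihilator_isCompact H hopen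
  have hΛm : MeasurableSet Λ := hΛc.isClosed.measurableSet
  have hHm : MeasurableSet (H : Set G) := hopen.measurableSet
  set c : ℝ := (μ (H : Set G)).toReal with hcdef
  set f : G → ℂ := Set.indicator (H : Set G) (fun _ => (1 : ℂ)) with hfdef
  have hfc : Continuous f :=
    continuous_indicator (by simp [IsClopen.frontier_eq ⟨hcomp.isClosed, hopen⟩])
      continuous_const.continuousOn
  have hfs : HasCompactSupport f :=
    HasCompactSupport.intro hcomp fun x hx => Set.indicator_of_notMem hx _
  have hFT : ∀ χ : PontryaginDual G, (∫ g, (starRingEnd ℂ) (χ g : ℂ) * f g ∂μ) =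
      Set.indicator Λ (fun _ => (c : ℂ)) χ := by
    intro χ
    have h1 : (fun g => (starRingEnd ℂ) (χ g : ℂ) * f g) =
        Set.indicator (H : Set G) (fun g => (starRingEnd ℂ) (χ g : ℂ)) := by
      ext g
      by_cases hg : g ∈ (H : Set G) <;>
        simp [hfdef, Set.indicator_of_mem, Set.indicator_of_notMem, hg]
    rw [h1, integral_indicator hHm]
    by_cases hχ : χ ∈ Λ
    · rw [Set.indicator_of_mem hχ]
      have heq : Set.EqOn (fun g => (starRingEnd ℂ) (χ g : ℂ)) (fun _ => (1 : ℂ))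
          (H : Set G) := by
        intro g hg
        simp [hχ g hg]
      rw [setIntegral_congr_fun hHm heq, setIntegral_const]
      simp [hcdef, measureReal_def]
    · rw [Set.indicator_of_notMem hχ]
      simp only [hΛdef, Set.mem_setOf_eq, not_forall] at hχ
      obtain ⟨h₀, hh₀, hne⟩ := hχ
      set I : ℂ := ∫ g in (H : Set G), (starRingEnd ℂ) (χ g : ℂ) ∂μ with hIdef
      have key : I = (starRingEnd ℂ) (χ h₀ : ℂ) * I := by
        have h2 := integral_mul_left_eq_self (μ := μ)
          (Set.indicator (H : Set G) (fun g => (starRingEnd ℂ) (χ g : ℂ))) h₀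
        have h3 : ∀ x : G, Set.indicator (H : Set G)
            (fun g => (starRingEnd ℂ) (χ g : ℂ)) (h₀ * x) =
            (starRingEnd ℂ) (χ h₀ : ℂ) *
              Set.indicator (H : Set G) (fun g => (starRingEnd ℂ) (χ g : ℂ)) x := by
          intro x
          by_cases hx : x ∈ (H : Set G)
          · rw [Set.indicator_of_mem (H.mul_mem hh₀ hx), Set.indicator_of_mem hx]
            rw [map_mul χ, Circle.coe_mul, map_mul]
          · rw [Set.indicator_of_notMem hx, Set.indicator_of_notMem (fun hmem => hx ?_),
              mul_zero]
            simpa using H.mul_mem (H.inv_mem hh₀) hmem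
        calc I = ∫ x, Set.indicator (H : Set G)
                (fun g => (starRingEnd ℂ) (χ g : ℂ)) x ∂μ := by
                rw [integral_indicator hHm]
          _ = ∫ x, Set.indicator (H : Set G)
                (fun g => (starRingEnd ℂ) (χ g : ℂ)) (h₀ * x) ∂μ := h2.symm
          _ = ∫ x, (starRingEnd ℂ) (χ h₀ : ℂ) *
                Set.indicator (H : Set G) (fun g => (starRingEnd ℂ) (χ g : ℂ)) x ∂μ := by
                simp_rw [h3]
          _ = (starRingEnd ℂ) (χ h₀ : ℂ) * I := by
                rw [integral_const_mul, hIdef, integral_indicator hHm]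
      have hne' : (starRingEnd ℂ) (χ h₀ : ℂ) ≠ 1 := by
        intro h
        apply hne
        have : (χ h₀ : ℂ) = 1 := by
          have := congrArg (starRingEnd ℂ) h
          simpa using this
        exact Circle.coe_injective (by simpa using this)
      have : ((starRingEnd ℂ) (χ h₀ : ℂ) - 1) * I = 0 := by
        rw [sub_mul, one_mul, ← key, sub_self]
      rcases mul_eq_zero.mp this with h | h
      · exact absurd (by linear_combination h) hne'
      · exact h
  have hint : Integrable
      (fun χ : PontryaginDual G => ∫ g, (starRingEnd ℂ) (χ g : ℂ) * f g ∂μ) μhat := by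
    rw [show (fun χ : PontryaginDual G => ∫ g, (starRingEnd ℂ) (χ g : ℂ) * f g ∂μ) =
        Set.indicator Λ (fun _ => (c : ℂ)) from funext hFT]
    exact (integrable_indicator_iff hΛm).mpr
      ((integrableOn_const_iff (C := (c : ℂ))).mpr (Or.inr hΛc.measure_lt_top))
  have h1 := hinv f hfc hfs hint 1
  rw [show f 1 = 1 from Set.indicator_of_mem H.one_mem _] at h1
  simp_rw [hFT] at h1
  have h2 : ∀ χ : PontryaginDual G,
      Set.indicator Λ (fun _ => (c : ℂ)) χ * ((χ 1 : Circle) : ℂ) =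
      Set.indicator Λ (fun _ => (c : ℂ)) χ := by
    intro χ
    rw [map_one χ, Circle.coe_one, mul_one]
  simp_rw [h2, integral_indicator hΛm, setIntegral_const] at h1
  have hreal : c * (μhat Λ).toReal = 1 := by
    have : ((c * (μhat Λ).toReal : ℝ) : ℂ) = 1 := by
      rw [h1, Complex.real_smul, measureReal_def]
      push_cast
      ring
    exact_mod_cast this
  have hfin1 : μ (H : Set G) ≠ ⊤ := hcomp.measure_lt_top.ne
  have hfin2 : μhat Λ ≠ ⊤ := hΛc.measure_lt_top.ne
  rw [← ENNReal.toReal_eq_one_iff, ENNReal.toReal_mul]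
  exact hreal
end

section
/- Let G be a finite abelian group and define, for an operator A on ℂ^G with kernel k_A(g,g'), the Kirkwood–Dirac distribution KD_A(g,χ) = conj(χ(g)) · (1/|G|) · Σ_{g'∈G} k_A(g,g') χ(g') (with suitable normalization). Then the map A ↦ KD_A is a unitary isomorphism from the Hilbert–Schmidt operators on ℂ^G (with inner product ⟨A,B⟩ = tr(A*B)) onto ℓ²(G × Ĝ) with the appropriate normalized counting measures. -/
open Finset

/-- The Kirkwood–Dirac distribution of an operator on `ℂ^G` given by its kernel `k`, as a
function on phase space `G × Ĝ` (with the normalization `1/|G|`). -/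
noncomputable def kdKernel {G : Type*} [AddCommGroup G] [Fintype G]
    (k : G → G → ℂ) : G × AddChar G Circle → ℂ :=
  fun p => (starRingEnd ℂ) (p.2 p.1 : ℂ) *
    ((Fintype.card G : ℂ)⁻¹ * ∑ g' : G, k p.1 g' * (p.2 g' : ℂ))

namespace KDAux

variable {G : Type*} [AddCommGroup G] [Fintype G] [Fintype (AddChar G Circle)]

lemma conj_coe (χ : AddChar G Circle) (a : G) :
    (starRingEnd ℂ) (χ a : ℂ) = (χ (-a) : ℂ) := by
  rw [AddChar.map_neg_eq_inv, ← Circle.coe_inv_eq_conj]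

lemma sum_char [DecidableEq G] (a : G) :
    ∑ χ : AddChar G Circle, (χ a : ℂ) = if a = 0 then (Fintype.card G : ℂ) else 0 := by
  rw [← AddChar.sum_apply_eq_ite a]
  exact Fintype.sum_equiv AddChar.circleEquivComplex.toEquiv _ _ (fun χ => rfl)

lemma key [DecidableEq G] (a b : G) :
    ∑ χ : AddChar G Circle, (starRingEnd ℂ) (χ a : ℂ) * (χ b : ℂ) =
      if b = a then (Fintype.card G : ℂ) else 0 := by
  have h : ∀ χ : AddChar G Circle, (starRingEnd ℂ) (χ a : ℂ) * (χ b : ℂ) = (χ (b - a) : ℂ) := by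
    intro χ
    simp [conj_coe, sub_eq_add_neg, AddChar.map_add_eq_mul, mul_comm]
  simp_rw [h, sum_char, sub_eq_zero]

lemma mul_conj_self (χ : AddChar G Circle) (g : G) :
    (χ g : ℂ) * (starRingEnd ℂ) (χ g : ℂ) = 1 := by
  rw [Complex.mul_conj, Circle.normSq_coe, Complex.ofReal_one]


lemma char_sum_eval [DecidableEq G] (cA cB : G → ℂ) :
    ∑ χ : AddChar G Circle,
        (∑ g' : G, cA g' * (starRingEnd ℂ) (χ g' : ℂ)) * (∑ g'' : G, cB g'' * (χ g'' : ℂ)) =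
      (Fintype.card G : ℂ) * ∑ g' : G, cA g' * cB g' := by
  simp_rw [Finset.sum_mul_sum, mul_mul_mul_comm]
  rw [Finset.sum_comm]
  have h : ∀ g' : G,
      ∑ χ : AddChar G Circle, ∑ g'' : G,
        (cA g' * cB g'') * ((starRingEnd ℂ) (χ g' : ℂ) * (χ g'' : ℂ)) =
      (Fintype.card G : ℂ) * (cA g' * cB g') := by
    intro g'
    rw [Finset.sum_comm]
    simp_rw [← Finset.mul_sum, key]
    simp [Finset.sum_ite_eq', mul_comm, mul_left_comm]
  simp_rw [h, ← Finset.mul_sum]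


lemma parseval [DecidableEq G] (kA kB : G → G → ℂ) :
    (Fintype.card G : ℂ) *
        ∑ p : G × AddChar G Circle, (starRingEnd ℂ) (kdKernel kA p) * kdKernel kB p =
      ∑ g : G, ∑ g' : G, (starRingEnd ℂ) (kA g g') * kB g g' := by
  have hN : (Fintype.card G : ℂ) ≠ 0 := Nat.cast_ne_zero.2 Fintype.card_ne_zero
  rw [Fintype.sum_prod_type]
  have hg : ∀ g : G,
      ∑ χ : AddChar G Circle, (starRingEnd ℂ) (kdKernel kA (g, χ)) * kdKernel kB (g, χ) =
        (Fintype.card G : ℂ)⁻¹ * ∑ g' : G, (starRingEnd ℂ) (kA g g') * kB g g' := by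
    intro g
    have hterm : ∀ χ : AddChar G Circle,
        (starRingEnd ℂ) (kdKernel kA (g, χ)) * kdKernel kB (g, χ) =
          ((Fintype.card G : ℂ)⁻¹ * (Fintype.card G : ℂ)⁻¹) *
            ((∑ g' : G, (starRingEnd ℂ) (kA g g') * (starRingEnd ℂ) (χ g' : ℂ)) *
              (∑ g'' : G, kB g g'' * (χ g'' : ℂ))) := by
      intro χ
      simp only [kdKernel, map_mul, Complex.conj_conj, map_inv₀, map_natCast, map_sum]
      rw [mul_mul_mul_comm, mul_conj_self, one_mul]
      ring
    simp_rw [hterm]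
    rw [← Finset.mul_sum, char_sum_eval]
    field_simp
  simp_rw [hg]
  rw [← Finset.mul_sum, ← mul_assoc, mul_inv_cancel₀ hN, one_mul]

noncomputable def kdLin (G : Type*) [AddCommGroup G] [Fintype G] :
    (G → G → ℂ) →ₗ[ℂ] (G × AddChar G Circle → ℂ) where
  toFun := kdKernel
  map_add' k₁ k₂ := by
    funext p
    simp [kdKernel, Finset.sum_add_distrib, add_mul, mul_add]
  map_smul' c k := by
    funext p
    simp only [kdKernel, Pi.smul_apply, smul_eq_mul, RingHom.id_apply]
    simp_rw [mul_assoc, ← Finset.mul_sum]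
    ring

lemma kd_injective [DecidableEq G] : Function.Injective (kdKernel (G := G)) := by
  have hN : (Fintype.card G : ℂ) ≠ 0 := Nat.cast_ne_zero.2 Fintype.card_ne_zero
  have : Function.Injective (kdLin G) := by
    rw [← LinearMap.ker_eq_bot, LinearMap.ker_eq_bot']
    intro k hk
    have hS : ∀ (g : G) (χ : AddChar G Circle), ∑ g' : G, k g g' * (χ g' : ℂ) = 0 := by
      intro g χ
      have h0 := congrFun hk (g, χ)
      simp only [kdLin, LinearMap.coe_mk, AddHom.coe_mk, kdKernel, Pi.zero_apply] at h0
      rcases mul_eq_zero.1 h0 with h | h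
      · exact absurd h (by simp [Circle.coe_ne_zero])
      · rcases mul_eq_zero.1 h with h | h
        · exact absurd h (inv_ne_zero hN)
        · exact h
    funext g b
    have h2 : ∑ g' : G, k g g' * ∑ χ : AddChar G Circle,
        (starRingEnd ℂ) (χ b : ℂ) * (χ g' : ℂ) = 0 := by
      simp_rw [Finset.mul_sum]
      rw [Finset.sum_comm]
      refine Finset.sum_eq_zero fun χ _ => ?_
      calc ∑ g' : G, k g g' * ((starRingEnd ℂ) (χ b : ℂ) * (χ g' : ℂ))
          = (starRingEnd ℂ) (χ b : ℂ) * ∑ g' : G, k g g' * (χ g' : ℂ) := by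
            rw [Finset.mul_sum]; exact Finset.sum_congr rfl fun _ _ => by ring
        _ = 0 := by rw [hS g χ, mul_zero]
    simp_rw [key] at h2
    simp only [mul_ite, mul_zero, Finset.sum_ite_eq'] at h2
    simp only [Finset.mem_univ, if_true] at h2
    have := mul_eq_zero.1 h2
    tauto
  exact this

lemma hcard_char : Fintype.card (AddChar G Circle) = Fintype.card G := by
  rw [← AddChar.card_eq (α := G)]
  exact Fintype.card_congr AddChar.circleEquivComplex.toEquiv

lemma kd_bijective [DecidableEq G] : Function.Bijective (kdKernel (G := G)) := by
  have hinj : Function.Injective (kdLin G) := kd_injective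
  have hfr : Module.finrank ℂ (G → G → ℂ) =
      Module.finrank ℂ (G × AddChar G Circle → ℂ) := by
    rw [Module.finrank_fintype_fun_eq_card, Module.finrank_pi_fintype,
      Module.finrank_fintype_fun_eq_card]
    simp [Fintype.card_prod, hcard_char]
  exact ⟨hinj, (LinearMap.injective_iff_surjective_of_finrank_eq_finrank hfr).1 hinj⟩

end KDAux

/-- Let `G` be a finite abelian group. The map `A ↦ KD_A` sending an operator
on `ℂ^G` (identified with its kernel) to its Kirkwood–Dirac distribution is a unitary isomorphism
from the Hilbert–Schmidt operators on `ℂ^G` (with inner product `tr(A*B)`) onto `ℓ²(G × Ĝ)` with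
the appropriately normalized counting measures: it is bijective and preserves inner products. -/
theorem kd_unitary_finite
    (G : Type*) [AddCommGroup G] [Fintype G] [Fintype (AddChar G Circle)] :
    Function.Bijective (kdKernel (G := G)) ∧
      ∀ kA kB : G → G → ℂ,
        (Fintype.card G : ℂ) *
            ∑ p : G × AddChar G Circle, (starRingEnd ℂ) (kdKernel kA p) * kdKernel kB p =
          ∑ g : G, ∑ g' : G, (starRingEnd ℂ) (kA g g') * kB g g' := by
  classical
  exact ⟨KDAux.kd_bijective, fun kA kB => KDAux.parseval kA kB⟩
end

section
/- Let G be a finite abelian group and ψ : G → ℂ nonzero with KD_ψ pointwise nonnegative on G × Ĝ, where KD_ψ(g,χ) = conj(χ(g))·ψ(g)·conj(ψ̂(χ)). Then there exist a subgroup H ≤ G, an element g₀ ∈ G, a character χ₀ ∈ Ĝ, and a constant c ∈ ℂ∖{0} such that ψ(g) = c·χ₀(g)·1_H(g−g₀) for all g ∈ G. -/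
open Finset
open scoped Classical

private noncomputable instance myDualFintype {α : Type*} [AddCommGroup α] [Finite α] :
    Fintype (AddChar α Circle) :=
  Fintype.ofEquiv (AddChar α ℂ) AddChar.circleEquivComplex.toEquiv.symm

private lemma circle_orth {α : Type*} [AddCommGroup α] [Fintype α] (a : α) :
    ∑ χ : AddChar α Circle, (χ a : ℂ) = if a = 0 then (Fintype.card α : ℂ) else 0 := by
  rw [← AddChar.sum_apply_eq_ite a]
  exact Fintype.sum_equiv AddChar.circleEquivComplex.toEquiv _ _ (fun χ => rfl)

private noncomputable def liftChar {G : Type*} [AddCommGroup G] (H : AddSubgroup G)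
    (χ : AddChar G Circle) : AddChar (G ⧸ H) Circle :=
  if h : ∀ x ∈ H, χ x = 1 then
    AddChar.toAddMonoidHomEquiv.symm (QuotientAddGroup.lift H (AddChar.toAddMonoidHomEquiv χ)
      (fun x hx => by
        have := h x hx
        simp [AddChar.toAddMonoidHomEquiv_apply, this]))
  else 0

private lemma liftChar_mk {G : Type*} [AddCommGroup G] (H : AddSubgroup G)
    (χ : AddChar G Circle) (h : ∀ x ∈ H, χ x = 1) (g : G) :
    liftChar H χ ((g : G ⧸ H)) = χ g := by
  rw [liftChar, dif_pos h]
  rfl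

private lemma annih_sum {G : Type*} [AddCommGroup G] [Fintype G] (H : AddSubgroup G) (x : G) :
    ∑ χ : AddChar G Circle, (if ∀ h ∈ H, χ h = 1 then (χ x : ℂ) else 0)
      = if x ∈ H then (Nat.card (G ⧸ H) : ℂ) else 0 := by
  have : Fintype (G ⧸ H) := Fintype.ofFinite _
  rw [← Finset.sum_filter]
  have key : ∑ χ ∈ univ.filter (fun χ : AddChar G Circle => ∀ h ∈ H, χ h = 1), (χ x : ℂ)
      = ∑ ρ : AddChar (G ⧸ H) Circle, (ρ ((x : G ⧸ H)) : ℂ) := by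
    refine Finset.sum_nbij' (fun χ => liftChar H χ)
      (fun ρ => ρ.compAddMonoidHom (QuotientAddGroup.mk' H)) ?_ ?_ ?_ ?_ ?_
    · intro χ hχ; exact mem_univ _
    · intro ρ _
      simp only [mem_filter, mem_univ, true_and]
      intro h hh
      have : ((h : G ⧸ H)) = 0 := (QuotientAddGroup.eq_zero_iff h).2 hh
      simp [AddChar.compAddMonoidHom_apply, QuotientAddGroup.mk'_apply, this]
    · intro χ hχ
      simp only [mem_filter, mem_univ, true_and] at hχ
      ext g
      simpa using congrArg (fun z : Circle => (z : ℂ)) (liftChar_mk H χ hχ g)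
    · intro ρ _
      ext q
      induction q using QuotientAddGroup.induction_on with
      | H g =>
        have hP : ∀ x ∈ H, (ρ.compAddMonoidHom (QuotientAddGroup.mk' H)) x = 1 := by
          intro h hh
          have : ((h : G ⧸ H)) = 0 := (QuotientAddGroup.eq_zero_iff h).2 hh
          simp [AddChar.compAddMonoidHom_apply, QuotientAddGroup.mk'_apply, this]
        simpa using congrArg (fun z : Circle => (z : ℂ)) (liftChar_mk H _ hP g)
    · intro χ hχ
      simp only [mem_filter, mem_univ, true_and] at hχ
      rw [liftChar_mk H χ hχ x]
  rw [key, circle_orth]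
  have hx : ((x : G ⧸ H)) = 0 ↔ x ∈ H := QuotientAddGroup.eq_zero_iff x
  by_cases hm : x ∈ H
  · rw [if_pos (hx.2 hm), if_pos hm, Nat.card_eq_fintype_card]
  · rw [if_neg (fun h => hm (hx.1 h)), if_neg hm]

/-- The Fourier transform of `ψ : G → ℂ` on a finite abelian group. -/
noncomputable def ftFin {G : Type*} [AddCommGroup G] [Fintype G]
    (ψ : G → ℂ) (χ : AddChar G Circle) : ℂ :=
  ∑ g : G, ψ g * (starRingEnd ℂ) (χ g : ℂ)

/-- The Kirkwood–Dirac distribution of the pure state `ψ`. -/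
noncomputable def kdFin {G : Type*} [AddCommGroup G] [Fintype G]
    (ψ : G → ℂ) (g : G) (χ : AddChar G Circle) : ℂ :=
  (starRingEnd ℂ) (χ g : ℂ) * ψ g * (starRingEnd ℂ) (ftFin ψ χ)

private lemma ft_inversion {G : Type*} [AddCommGroup G] [Fintype G] (ψ : G → ℂ) (g : G) :
    ∑ χ : AddChar G Circle, ftFin ψ χ * (χ g : ℂ) = (Fintype.card G : ℂ) * ψ g := by
  simp only [ftFin, Finset.sum_mul]
  rw [Finset.sum_comm]
  have key : ∀ h : G, ∑ χ : AddChar G Circle, ψ h * (starRingEnd ℂ) (χ h : ℂ) * (χ g : ℂ)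
      = ψ h * (if g - h = 0 then (Fintype.card G : ℂ) else 0) := by
    intro h
    rw [← circle_orth (g - h), Finset.mul_sum]
    refine Finset.sum_congr rfl fun χ _ => ?_
    have : (χ (g - h) : ℂ) = (χ g : ℂ) * (starRingEnd ℂ) (χ h : ℂ) := by
      rw [sub_eq_add_neg, AddChar.map_add_eq_mul, AddChar.map_neg_eq_inv]
      rw [Circle.coe_mul, Circle.coe_inv_eq_conj]
    rw [this]; ring
  rw [Finset.sum_congr rfl (fun h _ => key h)]
  rw [Finset.sum_congr rfl (fun h _ => by rw [mul_ite, mul_zero])]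
  simp [sub_eq_zero, eq_comm, mul_comm]

/-- (Classification of KD-positive pure states on finite abelian groups.)
Let `G` be a finite abelian group and `ψ : G → ℂ` nonzero with `KD_ψ` pointwise nonnegative on
`G × Ĝ`. Then there exist a subgroup `H ≤ G`, an element `g₀ ∈ G`, a character `χ₀ ∈ Ĝ`, and a
nonzero constant `c ∈ ℂ` such that `ψ g = c · χ₀ g · 1_H (g - g₀)` for all `g ∈ G`. -/
theorem kd_positive_pure_states_classification
    {G : Type*} [AddCommGroup G] [Fintype G]
    (ψ : G → ℂ) (hne : ψ ≠ 0)
    (hKD : ∀ (g : G) (χ : AddChar G Circle), 0 ≤ (kdFin ψ g χ).re ∧ (kdFin ψ g χ).im = 0) :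
    ∃ (H : AddSubgroup G) (g₀ : G) (χ₀ : AddChar G Circle) (c : ℂ), c ≠ 0 ∧
      ∀ g : G, ψ g = c * (χ₀ g : ℂ) *
        Set.indicator (H : Set G) (fun _ => (1 : ℂ)) (g - g₀) := by
  have hcard : (Fintype.card G : ℂ) ≠ 0 := Nat.cast_ne_zero.2 Fintype.card_ne_zero
  obtain ⟨g₀, hg₀⟩ : ∃ g, ψ g ≠ 0 := by
    by_contra h; push_neg at h; exact hne (funext h)
  -- every KD value equals its absolute value
  have hE : ∀ (g : G) (χ : AddChar G Circle),
      (starRingEnd ℂ) (χ g : ℂ) * ψ g * (starRingEnd ℂ) (ftFin ψ χ)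
        = ((‖ψ g‖ * ‖ftFin ψ χ‖ : ℝ) : ℂ) := by
    intro g χ
    obtain ⟨h1, h2⟩ := hKD g χ
    have hz1 : kdFin ψ g χ = ((kdFin ψ g χ).re : ℂ) := Complex.ext rfl (by simpa using h2)
    have hz2 : (‖kdFin ψ g χ‖ : ℂ) = kdFin ψ g χ := by
      conv_lhs => rw [hz1]
      rw [hz1]
      norm_cast
      simp [Complex.norm_real, _root_.abs_of_nonneg h1]
    have habs : ‖kdFin ψ g χ‖ = ‖ψ g‖ * ‖ftFin ψ χ‖ := by
      simp [kdFin, Complex.norm_conj, Circle.norm_coe]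
    calc (starRingEnd ℂ) (χ g : ℂ) * ψ g * (starRingEnd ℂ) (ftFin ψ χ)
        = kdFin ψ g χ := rfl
      _ = ((‖kdFin ψ g χ‖ : ℝ) : ℂ) := hz2.symm
      _ = _ := by rw [habs]
  -- a character with nonvanishing Fourier coefficient
  obtain ⟨χ₀, hu⟩ : ∃ χ : AddChar G Circle, ftFin ψ χ ≠ 0 := by
    by_contra h; push_neg at h
    refine hne (funext fun g => ?_)
    have h0 : (Fintype.card G : ℂ) * ψ g = 0 := by
      rw [← ft_inversion ψ g]; simp [h]
    exact (mul_eq_zero.1 h0).resolve_left hcard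
  -- constancy relation on the support
  have hconst : ∀ (χ : AddChar G Circle), ftFin ψ χ ≠ 0 → ∀ g, ψ g ≠ 0 →
      (χ g : ℂ) * (χ₀ g₀ : ℂ) = (χ g₀ : ℂ) * (χ₀ g : ℂ) := by
    intro χ hχ g hg
    have e3 : (starRingEnd ℂ) (χ g : ℂ) * ψ g * (starRingEnd ℂ) (ftFin ψ χ) *
          ((starRingEnd ℂ) (χ₀ g₀ : ℂ) * ψ g₀ * (starRingEnd ℂ) (ftFin ψ χ₀))
        = (starRingEnd ℂ) (χ g₀ : ℂ) * ψ g₀ * (starRingEnd ℂ) (ftFin ψ χ) *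
          ((starRingEnd ℂ) (χ₀ g : ℂ) * ψ g * (starRingEnd ℂ) (ftFin ψ χ₀)) := by
      rw [hE g χ, hE g₀ χ₀, hE g₀ χ, hE g χ₀]
      push_cast
      ring
    have hne4 : ψ g * ψ g₀ * (starRingEnd ℂ) (ftFin ψ χ) * (starRingEnd ℂ) (ftFin ψ χ₀) ≠ 0 := by
      have c1 : (starRingEnd ℂ) (ftFin ψ χ) ≠ 0 := by simpa using hχ
      have c2 : (starRingEnd ℂ) (ftFin ψ χ₀) ≠ 0 := by simpa using hu
      exact mul_ne_zero (mul_ne_zero (mul_ne_zero hg hg₀) c1) c2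
    have e5 : (starRingEnd ℂ) (χ g : ℂ) * (starRingEnd ℂ) (χ₀ g₀ : ℂ)
        = (starRingEnd ℂ) (χ g₀ : ℂ) * (starRingEnd ℂ) (χ₀ g : ℂ) := by
      apply mul_right_cancel₀ hne4
      linear_combination e3
    have := congrArg (starRingEnd ℂ) e5
    simpa [map_mul, Complex.conj_conj] using this
  -- the subgroup
  set S : Set G := Function.support ψ with hS
  set H : AddSubgroup G := AddSubgroup.closure ((fun g => g - g₀) '' S) with hH
  have hHf : ∀ (τ : AddChar G Circle), (∀ h ∈ H, τ h = 1) → ∀ g, ψ g ≠ 0 → τ g = τ g₀ := by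
    intro τ hτ g hg
    have hmem : g - g₀ ∈ H := by
      rw [hH]; exact AddSubgroup.subset_closure ⟨g, hg, rfl⟩
    have h1 : τ (g - g₀) = 1 := hτ _ hmem
    have h2 : τ g = τ (g - g₀) * τ g₀ := by
      rw [← AddChar.map_add_eq_mul, sub_add_cancel]
    rw [h2, h1, one_mul]
  have hHb : ∀ (τ : AddChar G Circle), (∀ g, ψ g ≠ 0 → τ g = τ g₀) → ∀ h ∈ H, τ h = 1 := by
    intro τ hτ h hh
    have hker : H ≤ (AddChar.toAddMonoidHomEquiv τ).ker := by
      rw [hH, AddSubgroup.closure_le]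
      rintro x ⟨g, hg, rfl⟩
      have h1 : τ g = τ g₀ := hτ g hg
      have h2 : τ (g - g₀) = 1 := by
        rw [sub_eq_add_neg, AddChar.map_add_eq_mul, AddChar.map_neg_eq_inv, h1, mul_inv_cancel]
      simp [AddMonoidHom.mem_ker, AddChar.toAddMonoidHomEquiv_apply, h2]
    have := hker hh
    simpa [AddMonoidHom.mem_ker, AddChar.toAddMonoidHomEquiv_apply] using this
  -- Fourier coefficients on the annihilator coset
  have hM : ∀ (τ : AddChar G Circle), (∀ h ∈ H, τ h = 1) →
      ftFin ψ (χ₀ + τ) = (starRingEnd ℂ) (τ g₀ : ℂ) * ftFin ψ χ₀ := by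
    intro τ hτ
    rw [ftFin, ftFin, Finset.mul_sum]
    refine Finset.sum_congr rfl fun h _ => ?_
    by_cases hh : ψ h = 0
    · simp [hh]
    · have h1 : τ h = τ g₀ := hHf τ hτ h hh
      rw [AddChar.add_apply, Circle.coe_mul, map_mul, h1]
      ring
  -- main computation
  have main : ∀ g : G, (Fintype.card G : ℂ) * ψ g
      = (if g - g₀ ∈ H then (Nat.card (G ⧸ H) : ℂ) else 0) * (ftFin ψ χ₀ * (χ₀ g : ℂ)) := by
    intro g
    rw [← ft_inversion ψ g]
    rw [show ∑ χ : AddChar G Circle, ftFin ψ χ * (χ g : ℂ)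
        = ∑ τ : AddChar G Circle, ftFin ψ (χ₀ + τ) * ((χ₀ + τ) g : ℂ) from
      (Fintype.sum_equiv (Equiv.addLeft χ₀) _ _ (fun τ => by simp)).symm]
    have step : ∀ τ : AddChar G Circle, ftFin ψ (χ₀ + τ) * ((χ₀ + τ) g : ℂ)
        = (if ∀ h ∈ H, τ h = 1 then (τ (g - g₀) : ℂ) else 0)
            * (ftFin ψ χ₀ * (χ₀ g : ℂ)) := by
      intro τ
      by_cases hP : ∀ h ∈ H, τ h = 1
      · rw [if_pos hP, hM τ hP, AddChar.add_apply, Circle.coe_mul]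
        have h3 : (τ (g - g₀) : ℂ) = (τ g : ℂ) * (starRingEnd ℂ) (τ g₀ : ℂ) := by
          rw [sub_eq_add_neg, AddChar.map_add_eq_mul, AddChar.map_neg_eq_inv,
            Circle.coe_mul, Circle.coe_inv_eq_conj]
        rw [h3]; ring
      · rw [if_neg hP, zero_mul]
        have hft : ftFin ψ (χ₀ + τ) = 0 := by
          by_contra hft
          apply hP
          apply hHb
          intro g' hg'
          have h4 := hconst (χ₀ + τ) hft g' hg'
          rw [AddChar.add_apply, AddChar.add_apply, Circle.coe_mul, Circle.coe_mul] at h4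
          have h5 : (χ₀ g' : ℂ) * (χ₀ g₀ : ℂ) ≠ 0 :=
            mul_ne_zero (Circle.coe_ne_zero _) (Circle.coe_ne_zero _)
          have h6 : (τ g' : ℂ) = (τ g₀ : ℂ) := by
            apply mul_left_cancel₀ h5
            linear_combination h4
          exact Circle.coe_injective h6
        rw [hft, zero_mul]
    rw [Finset.sum_congr rfl (fun τ _ => step τ), ← Finset.sum_mul, annih_sum H (g - g₀)]
  -- conclusion
  have hfinQ : Finite (G ⧸ H) := Quotient.finite _
  have hQ : (Nat.card (G ⧸ H) : ℂ) ≠ 0 := by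
    have : 0 < Nat.card (G ⧸ H) := Nat.card_pos
    exact_mod_cast this.ne'
  refine ⟨H, g₀, χ₀, ftFin ψ χ₀ * (Nat.card (G ⧸ H) : ℂ) / (Fintype.card G : ℂ),
    div_ne_zero (mul_ne_zero hu hQ) hcard, fun g => ?_⟩
  have hψ : ψ g = (if g - g₀ ∈ H then (Nat.card (G ⧸ H) : ℂ) else 0)
      * (ftFin ψ χ₀ * (χ₀ g : ℂ)) / (Fintype.card G : ℂ) := by
    rw [← main g]
    field_simp
  rw [hψ]
  by_cases hm : g - g₀ ∈ H
  · rw [if_pos hm, Set.indicator_of_mem hm]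
    ring
  · rw [if_neg hm, Set.indicator_of_notMem hm]
    ring
end
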